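/- arXiv:1403.6540 — 3 statements merged into one kernel-verified Lean document; each statement's English description precedes it below -/
import Mathlib

section
/- The discrete Fourier transform magnitude of the Haar wavelet satisfies: for the Haar mother wavelet at scale l and any translation p in the discrete Haar basis of C^{2^r}, |Fφ_{l,p}(ω)| = 2^{l/2−r+1} |sin(πω/2^{l+1})|² / |sin(πω/2^r)| for all integers ω with 0 < |ω| < 2^r, and in particular this value is independent of the translation parameter p. -/
open Real

/-- The discrete Haar wavelet in `ℂ^(2^r)` at scale `l` and shift `p`: it takes the
value `2^((l-r)/2)` on `[p·2^{r-l}, p·2^{r-l} + 2^{r-l-1})`, the value `-2^((l-r)/2)`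
on `[p·2^{r-l} + 2^{r-l-1}, (p+1)·2^{r-l})`, and `0` elsewhere. -/
noncomputable def haarWavelet (r l p : ℕ) (t : Fin (2 ^ r)) : ℂ :=
  if p * 2 ^ (r - l) ≤ (t : ℕ) ∧ (t : ℕ) < p * 2 ^ (r - l) + 2 ^ (r - l - 1) then
    ((2 : ℝ) ^ (((l : ℝ) - r) / 2) : ℝ)
  else if p * 2 ^ (r - l) + 2 ^ (r - l - 1) ≤ (t : ℕ) ∧ (t : ℕ) < (p + 1) * 2 ^ (r - l) then
    -((2 : ℝ) ^ (((l : ℝ) - r) / 2) : ℝ)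
  else 0

/-- The discrete Fourier transform of `x ∈ ℂ^n` at integer frequency `ω`:
`Fx(ω) = n^{-1/2} Σ_t x(t) e^{-2πi ω t / n}`. -/
noncomputable def dftAt {n : ℕ} (x : Fin n → ℂ) (ω : ℤ) : ℂ :=
  (1 / Real.sqrt n : ℝ) *
    ∑ t : Fin n, x t * Complex.exp (-2 * Real.pi * Complex.I * ω * (t : ℕ) / n)

lemma abs_exp_I_sub_one (θ : ℝ) :
    ‖Complex.exp (θ * Complex.I) - 1‖ = 2 * |Real.sin (θ / 2)| := by
  rw [Complex.norm_def]
  have hre : (Complex.exp (θ * Complex.I) - 1).re = Real.cos θ - 1 := by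
    simp [Complex.exp_ofReal_mul_I_re]
  have him : (Complex.exp (θ * Complex.I) - 1).im = Real.sin θ := by
    simp [Complex.exp_ofReal_mul_I_im]
  rw [Complex.normSq_apply, hre, him]
  have hc : Real.cos θ = 1 - 2 * Real.sin (θ/2) ^ 2 := by
    have h : Real.cos (2*(θ/2)) = 2 * Real.cos (θ/2)^2 - 1 := Real.cos_two_mul _
    have h2 := Real.sin_sq_add_cos_sq (θ/2)
    have he : 2*(θ/2) = θ := by ring
    rw [he] at h
    linarith
  have key : (Real.cos θ - 1) * (Real.cos θ - 1) + Real.sin θ * Real.sin θ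
      = (2 * |Real.sin (θ/2)|) ^ 2 := by
    have h2 := Real.sin_sq_add_cos_sq θ
    have h3 : |Real.sin (θ/2)| ^ 2 = Real.sin (θ/2) ^ 2 := sq_abs _
    nlinarith
  rw [key, Real.sqrt_sq (by positivity)]

/-- for all integer frequencies `ω` with `0 < |ω| < 2^r`, the magnitude of
the DFT of the Haar wavelet at scale `l` and shift `p` equals
`2^(l/2 - r + 1) |sin(πω/2^{l+1})|² / |sin(πω/2^r)|`; in particular it does not depend
on the shift `p`. -/
theorem abs_dft_haarWavelet (r l p : ℕ) (hl : l < r) (hp : p < 2 ^ l)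
    (ω : ℤ) (hω0 : ω ≠ 0) (hω : |ω| < 2 ^ r) :
    ‖dftAt (haarWavelet r l p) ω‖ =
      (2 : ℝ) ^ ((l : ℝ) / 2 - r + 1) *
        |Real.sin (Real.pi * ω / 2 ^ (l + 1))| ^ 2 / |Real.sin (Real.pi * ω / 2 ^ r)| := by
  have hr : 0 < r := lt_of_le_of_lt (Nat.zero_le l) hl
  set n : ℕ := 2 ^ r with hn
  have hn0 : 0 < n := pow_pos (by norm_num) r
  have hnR : (n : ℝ) = 2 ^ r := by rw [hn]; push_cast; ring
  set m : ℕ := 2 ^ (r - l - 1) with hm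
  set s : ℕ := p * 2 ^ (r - l) with hs
  have h2m : 2 ^ (r - l) = 2 * m := by
    rw [hm, ← pow_succ']
    congr 1
    omega
  have hpe : (p + 1) * 2 ^ (r - l) = s + 2 * m := by
    rw [add_mul, one_mul, ← hs, h2m]
  have hsub : s + 2 * m ≤ n := by
    rw [← hpe]
    show (p + 1) * 2 ^ (r - l) ≤ 2 ^ r
    calc (p+1) * 2^(r-l) ≤ 2^l * 2^(r-l) := Nat.mul_le_mul_right _ hp
      _ = 2 ^ r := by rw [← pow_add]; congr 1; omega
  set θ : ℝ := -2 * Real.pi * ω / n with hθ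
  set q : ℂ := Complex.exp ((θ : ℂ) * Complex.I) with hqdef
  -- q ≠ 1
  have hq1 : q ≠ 1 := by
    intro h
    rw [hqdef, Complex.exp_eq_one_iff] at h
    obtain ⟨k, hk⟩ := h
    have hI : ((θ : ℝ) : ℂ) = ((2 * Real.pi * k : ℝ) : ℂ) := by
      have : ((θ : ℝ) : ℂ) * Complex.I = ((2 * Real.pi * k : ℝ) : ℂ) * Complex.I := by
        rw [hk]; push_cast; ring
      exact mul_right_cancel₀ Complex.I_ne_zero this
    rw [Complex.ofReal_inj, hθ] at hI
    have hπ : Real.pi ≠ 0 := Real.pi_ne_zero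
    have hnR0 : (n : ℝ) ≠ 0 := Nat.cast_ne_zero.mpr hn0.ne'
    have h2π : (2 * Real.pi) ≠ 0 := by positivity
    have hωn : (ω : ℝ) = -k * n := by
      field_simp at hI
      have h2 : (2*Real.pi) * (-(ω:ℝ)) = (2*Real.pi) * ((k:ℝ)*n) := by linear_combination (2*Real.pi) * hI
      have := mul_left_cancel₀ h2π h2
      linarith
    have hωn' : ω = -k * n := by exact_mod_cast hωn
    have hk0 : k ≠ 0 := by
      intro h0; rw [h0] at hωn'; simp at hωn'; exact hω0 hωn'
    have h1 : (n:ℤ) ≤ |k| * n := le_mul_of_one_le_left (by positivity) (Int.one_le_abs hk0)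
    have h2 : (n:ℤ) ≤ |ω| := by
      rw [hωn', abs_mul, abs_neg, abs_of_nonneg (by positivity : (0:ℤ) ≤ (n:ℤ))]
      exact h1
    rw [hn] at h2
    push_cast at h2
    omega
  have habs_q : ‖q‖ = 1 := Complex.norm_exp_ofReal_mul_I θ
  set a : ℝ := (2:ℝ) ^ (((l:ℝ) - (r:ℝ)) / 2) with ha
  have ha0 : 0 ≤ a := Real.rpow_nonneg (by norm_num) _
  -- exponential as powers of q
  have hE : ∀ t : ℕ, Complex.exp (-2 * Real.pi * Complex.I * (ω:ℂ) * (t : ℕ) / (n:ℂ)) = q ^ t := by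
    intro t
    rw [hqdef, ← Complex.exp_nat_mul]
    congr 1
    rw [hθ]
    have hnC : ((n:ℝ) : ℂ) = (n : ℂ) := by push_cast; rfl
    push_cast
    ring
  -- the auxiliary function on ℕ
  set g : ℕ → ℂ := fun u =>
    (if s ≤ u ∧ u < s + m then (a:ℂ) else if s + m ≤ u ∧ u < s + 2*m then -(a:ℂ) else 0) * q ^ u
    with hg
  have hgt : ∀ t : Fin n,
      haarWavelet r l p t * Complex.exp (-2 * Real.pi * Complex.I * (ω:ℂ) * ((t:ℕ) : ℂ) / (n:ℂ))
        = g (t : ℕ) := by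
    intro t
    rw [hE]
    rw [hg]
    simp only [haarWavelet]
    rw [hpe, ← hs, ← hm, ← ha]
  -- the sum
  have hsum : (∑ t : Fin n, haarWavelet r l p t *
        Complex.exp (-2 * Real.pi * Complex.I * (ω:ℂ) * ((t:ℕ):ℂ) / (n:ℂ)))
      = -(a:ℂ) * q ^ s * (q ^ m - 1)^2 / (q - 1) := by
    calc (∑ t : Fin n, haarWavelet r l p t *
          Complex.exp (-2 * Real.pi * Complex.I * (ω:ℂ) * ((t:ℕ):ℂ) / (n:ℂ)))
        = ∑ t : Fin n, g (t:ℕ) := Finset.sum_congr rfl (fun t _ => hgt t)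
      _ = ∑ u ∈ Finset.range n, g u := Fin.sum_univ_eq_sum_range g n
      _ = ∑ u ∈ Finset.Ico s (s + 2*m), g u := by
          refine (Finset.sum_subset ?_ ?_).symm
          · intro x hx
            simp only [Finset.mem_Ico, Finset.mem_range] at hx ⊢
            omega
          · intro x hx hx2
            simp only [Finset.mem_Ico, Finset.mem_range] at hx hx2
            rw [hg]
            simp only
            rw [if_neg (by omega), if_neg (by omega), zero_mul]
      _ = (∑ u ∈ Finset.Ico s (s+m), g u) + ∑ u ∈ Finset.Ico (s+m) (s+2*m), g u := by
          rw [Finset.sum_Ico_consecutive g (by omega) (by omega)]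
      _ = (a:ℂ) * ∑ u ∈ Finset.Ico s (s+m), q^u
          + (-(a:ℂ)) * ∑ u ∈ Finset.Ico (s+m) (s+2*m), q^u := by
          rw [Finset.mul_sum, Finset.mul_sum]
          congr 1
          · refine Finset.sum_congr rfl fun u hu => ?_
            simp only [Finset.mem_Ico] at hu
            rw [hg]; simp only; rw [if_pos (by omega)]
          · refine Finset.sum_congr rfl fun u hu => ?_
            simp only [Finset.mem_Ico] at hu
            rw [hg]; simp only; rw [if_neg (by omega), if_pos (by omega)]
      _ = (a:ℂ) * ((q^(s+m) - q^s)/(q-1)) + (-(a:ℂ)) * ((q^(s+2*m) - q^(s+m))/(q-1)) := by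
          rw [geom_sum_Ico hq1 (by omega), geom_sum_Ico hq1 (by omega)]
      _ = -(a:ℂ) * q ^ s * (q ^ m - 1)^2 / (q - 1) := by
          have hq1' : q - 1 ≠ 0 := sub_ne_zero.mpr hq1
          field_simp
          rw [pow_add, pow_add, pow_mul]
          ring
  -- rewrite the goal
  rw [dftAt, hsum]
  rw [norm_mul, norm_div, norm_mul, norm_mul, norm_pow, norm_pow, habs_q, one_pow, mul_one]
  have hAa : ‖(-(a:ℂ))‖ = a := by
    rw [norm_neg, Complex.norm_real, Real.norm_eq_abs, abs_of_nonneg ha0]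
  rw [hAa, Complex.norm_real, Real.norm_eq_abs]
  -- the two sine expressions
  have hqm : q ^ m = Complex.exp ((((m:ℝ) * θ : ℝ) : ℂ) * Complex.I) := by
    rw [hqdef, ← Complex.exp_nat_mul]
    congr 1
    push_cast
    ring
  have hB : ‖q - 1‖ = 2 * |Real.sin (Real.pi * ω / 2 ^ r)| := by
    rw [hqdef, abs_exp_I_sub_one]
    congr 1
    have : θ / 2 = -(Real.pi * ω / 2 ^ r) := by
      rw [hθ, hnR]; ring
    rw [this, Real.sin_neg, abs_neg]
  have hmn : (m:ℝ) * 2 ^ (l+1) = (n:ℝ) := by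
    rw [hm, hnR]
    push_cast
    rw [← pow_add]
    congr 1
    omega
  have hA : ‖q ^ m - 1‖ = 2 * |Real.sin (Real.pi * ω / 2 ^ (l+1))| := by
    rw [hqm, abs_exp_I_sub_one]
    congr 1
    have hne : ((2:ℝ)) ^ (l+1) ≠ 0 := by positivity
    have hnR0 : (n : ℝ) ≠ 0 := Nat.cast_ne_zero.mpr hn0.ne'
    have : (m:ℝ) * θ / 2 = -(Real.pi * ω / 2 ^ (l+1)) := by
      rw [hθ]
      field_simp
      linear_combination (-1 : ℝ) * hmn
    rw [this, Real.sin_neg, abs_neg]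
  rw [hA, hB]
  -- final numerical identity
  have hsq : Real.sqrt n = (2:ℝ) ^ ((r:ℝ)/2) := by
    rw [hnR, ← Real.rpow_natCast 2 r, Real.sqrt_eq_rpow, ← Real.rpow_mul (by norm_num)]
    congr 1
    ring
  have habs0 : |1 / Real.sqrt n| = 1 / Real.sqrt n := by
    rw [abs_of_nonneg]
    positivity
  rw [habs0]
  have hCgen : ∀ u v : ℝ, (2:ℝ)^u * (2:ℝ)^v * 2 = (2:ℝ)^(u+v+1) := by
    intro u v
    nth_rewrite 3 [← Real.rpow_one 2]
    rw [← Real.rpow_add (by norm_num), ← Real.rpow_add (by norm_num)]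
  have hC : (1 / Real.sqrt n) * a * 2 = (2:ℝ) ^ ((l:ℝ)/2 - r + 1) := by
    rw [hsq, ha, one_div, ← Real.rpow_neg (by norm_num), hCgen]
    congr 1
    ring
  set x := |Real.sin (Real.pi * ω / 2 ^ (l+1))| with hx
  set y := |Real.sin (Real.pi * ω / 2 ^ r)| with hy
  calc (1 / Real.sqrt n) * (a * (2*x)^2 / (2*y))
      = (1 / Real.sqrt n) * ((2*(a*2*x^2)) / (2*y)) := by ring_nf
    _ = (1 / Real.sqrt n) * ((a*2*x^2) / y) := by
        rw [mul_div_mul_left _ _ (two_ne_zero)]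
    _ = ((1 / Real.sqrt n) * a * 2) * x^2 / y := by ring
    _ = (2:ℝ) ^ ((l:ℝ)/2 - r + 1) * x^2 / y := by rw [hC]
end

section
/- Local coherence bound for Fourier/Haar: with sampling levels given by the dyadic frequency bands W_j and sparsity levels given by Haar wavelet scales, the blocks U_{jl} of the DFT-to-Haar change-of-basis matrix U = FΦ satisfy μ(U_{jj}) ≲ 2^{−j} and μ(U_{jl}) ≲ μ(U_{jj}) 2^{−|j−l|} for all j, l = 0,...,r−1, where μ of a block is the maximum squared modulus of its entries. -/
/-- The `j`-th dyadic frequency band: `W_0 = {0, 1}` and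
`W_j = {-2^j+1, ..., -2^{j-1}} ∪ {2^{j-1}+1, ..., 2^j}` for `j ≥ 1`. -/
def freqBand (j : ℕ) : Set ℤ :=
  if j = 0 then {0, 1}
  else Set.Icc (-2 ^ j + 1) (-2 ^ (j - 1)) ∪ Set.Icc (2 ^ (j - 1) + 1) (2 ^ j)

/-- The local coherence `μ(U_{jl})` of the block of the DFT-to-Haar matrix `U = FΦ`
with rows in the frequency band `W_j` and columns the Haar wavelets at scale `l`:
the supremum of the squared moduli of its entries. -/
noncomputable def muBlock (r j l : ℕ) : ℝ :=
  sSup {t : ℝ | ∃ ω ∈ freqBand j, ∃ p < 2 ^ l,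
    t = ‖dftAt (haarWavelet r l p) ω‖ ^ 2}

section LCHAux
open Real Complex Finset

lemma normExpI (θ : ℝ) : ‖Complex.exp (θ * Complex.I) - 1‖ = 2 * |Real.sin (θ/2)| := by
  have h1 : Complex.exp (θ * Complex.I) - 1 = Complex.ofReal (Real.cos θ - 1) + Complex.ofReal (Real.sin θ) * Complex.I := by
    rw [Complex.exp_mul_I]; push_cast; ring
  rw [h1, Complex.norm_add_mul_I]
  have h2 : (Real.cos θ - 1)^2 + Real.sin θ^2 = (2 * |Real.sin (θ/2)|)^2 := by
    have := Real.sin_sq_add_cos_sq θ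
    have h3 : Real.sin (θ/2)^2 = 1/2 - Real.cos (2*(θ/2))/2 := Real.sin_sq_eq_half_sub _
    rw [show 2*(θ/2) = θ by ring] at h3
    rw [mul_pow, _root_.sq_abs]
    nlinarith
  rw [h2, Real.sqrt_sq (by positivity)]


lemma normExpI_le (θ : ℝ) : ‖Complex.exp (θ * Complex.I) - 1‖ ≤ |θ| := by
  rw [normExpI]
  have h6 : |θ/2| = |θ|/2 := by rw [abs_div, _root_.abs_two]
  have := Real.abs_sin_le_abs (x := θ/2)
  rw [h6] at this; linarith


lemma le_normExpI (θ : ℝ) (h : |θ| ≤ π) : 2/π * |θ| ≤ ‖Complex.exp (θ * Complex.I) - 1‖ := by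
  rw [normExpI]
  have h6 : |θ/2| = |θ|/2 := by rw [abs_div, _root_.abs_two]
  have h2 : |θ/2| ≤ π/2 := by rw [h6]; linarith
  have h4 := Real.mul_abs_le_abs_sin h2
  rw [h6] at h4
  have h5 : 2/π * |θ| = 2 * (2/π * (|θ|/2)) := by ring
  linarith


noncomputable def lchZ (r : ℕ) (ω : ℤ) : ℂ :=
  Complex.exp (((-2 * Real.pi * ω / 2 ^ r : ℝ)) * Complex.I)


lemma lch_exp_eq (r : ℕ) (ω : ℤ) (t : ℕ) :
    Complex.exp (-2 * (Real.pi:ℂ) * Complex.I * (ω:ℂ) * (t : ℕ) / ((2^r : ℕ):ℂ)) = lchZ r ω ^ t := by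
  rw [lchZ, ← Complex.exp_nat_mul]
  congr 1
  push_cast
  have h2 : ((2:ℂ)^r) ≠ 0 := pow_ne_zero _ two_ne_zero
  field_simp


lemma lch_sum_eq (r l p : ℕ) (hl : l < r) (hp : p < 2^l) (ω : ℤ) :
    ∑ t : Fin (2^r), haarWavelet r l p t *
        Complex.exp (-2 * Real.pi * Complex.I * ω * (t : ℕ) / ((2^r : ℕ))) =
      (((2 : ℝ) ^ (((l : ℝ) - r) / 2) : ℝ) : ℂ) *
        ((∑ t ∈ Finset.Ico (p * 2^(r-l)) (p * 2^(r-l) + 2^(r-l-1)), lchZ r ω ^ t) -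
         (∑ t ∈ Finset.Ico (p * 2^(r-l) + 2^(r-l-1)) (p * 2^(r-l) + 2*2^(r-l-1)), lchZ r ω ^ t)) := by
  have hab : (p+1) * 2^(r-l) = p * 2^(r-l) + 2*2^(r-l-1) := by
    obtain ⟨k, hk⟩ : ∃ k, r - l = k + 1 := ⟨r-l-1, by omega⟩
    have hk2 : r - l - 1 = k := by omega
    rw [hk2, hk]; ring
  have hub : (p+1) * 2 ^ (r-l) ≤ 2^r := by
    calc (p+1) * 2^(r-l) ≤ 2^l * 2^(r-l) := Nat.mul_le_mul_right _ hp
      _ = 2^r := by rw [← pow_add]; congr 1; omega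
  have hub2 : p * 2^(r-l) + 2*2^(r-l-1) ≤ 2^r := hab ▸ hub
  set h : ℂ := (((2 : ℝ) ^ (((l : ℝ) - r) / 2) : ℝ) : ℂ) with hh
  set g : ℕ → ℂ := fun t => (if p * 2^(r-l) ≤ t ∧ t < p * 2^(r-l) + 2^(r-l-1) then h * lchZ r ω ^ t else 0) +
        (if p * 2^(r-l) + 2^(r-l-1) ≤ t ∧ t < p * 2^(r-l) + 2*2^(r-l-1) then -h * lchZ r ω ^ t else 0) with hg
  have hsum : ∀ t : Fin (2^r), haarWavelet r l p t *
      Complex.exp (-2 * Real.pi * Complex.I * ω * (t : ℕ) / ((2^r : ℕ))) = g (t : ℕ) := by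
    intro t
    rw [haarWavelet, lch_exp_eq, hab, hg]
    by_cases h1 : p * 2^(r-l) ≤ (t:ℕ) ∧ (t:ℕ) < p * 2^(r-l) + 2^(r-l-1)
    · have h2 : ¬(p * 2^(r-l) + 2^(r-l-1) ≤ (t:ℕ) ∧ (t:ℕ) < p * 2^(r-l) + 2*2^(r-l-1)) := by omega
      simp only [if_pos h1, if_neg h2]
      ring
    · by_cases h2 : p * 2^(r-l) + 2^(r-l-1) ≤ (t:ℕ) ∧ (t:ℕ) < p * 2^(r-l) + 2*2^(r-l-1)
      · simp only [if_neg h1, if_pos h2]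
        ring
      · simp only [if_neg h1, if_neg h2]
        ring
  rw [Finset.sum_congr rfl (fun t _ => hsum t), Fin.sum_univ_eq_sum_range g]
  rw [Finset.sum_add_distrib]
  have hf1 : (Finset.range (2^r)).filter
      (fun t => p * 2^(r-l) ≤ t ∧ t < p * 2^(r-l) + 2^(r-l-1)) =
      Finset.Ico (p * 2^(r-l)) (p * 2^(r-l) + 2^(r-l-1)) := by
    ext t; simp only [Finset.mem_filter, Finset.mem_range, Finset.mem_Ico]; omega
  have hf2 : (Finset.range (2^r)).filter
      (fun t => p * 2^(r-l) + 2^(r-l-1) ≤ t ∧ t < p * 2^(r-l) + 2*2^(r-l-1)) =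
      Finset.Ico (p * 2^(r-l) + 2^(r-l-1)) (p * 2^(r-l) + 2*2^(r-l-1)) := by
    ext t; simp only [Finset.mem_filter, Finset.mem_range, Finset.mem_Ico]; omega
  rw [← Finset.sum_filter, ← Finset.sum_filter, hf1, hf2, ← Finset.mul_sum, ← Finset.mul_sum]
  ring


lemma lch_pow_nat (r l : ℕ) (hl : l < r) : (2:ℕ)^(r-l-1)*2*2^l = 2^r := by
  obtain ⟨k, hk⟩ : ∃ k, r - l = k + 1 := ⟨r-l-1, by omega⟩
  have hk2 : r - l - 1 = k := by omega
  have hr' : r = k+1+l := by omega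
  rw [hk2, hr']; ring


lemma lch_zm (r l : ℕ) (hl : l < r) (ω : ℤ) :
    lchZ r ω ^ (2^(r-l-1)) = Complex.exp (((-Real.pi * ω / 2^l : ℝ)) * Complex.I) := by
  rw [lchZ, ← Complex.exp_nat_mul]
  congr 1
  have hC : ((2:ℂ)^(r-l-1))*2*2^l = 2^r := by exact_mod_cast congrArg (Nat.cast (R := ℂ)) (lch_pow_nat r l hl)
  have h2l : ((2:ℂ)^l) ≠ 0 := pow_ne_zero _ two_ne_zero
  have h2r : ((2:ℂ)^r) ≠ 0 := pow_ne_zero _ two_ne_zero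
  push_cast
  field_simp
  linear_combination -(ω:ℂ) * hC


lemma lch_dft_eq (r l p : ℕ) (hl : l < r) (hp : p < 2^l) (ω : ℤ) (hz : lchZ r ω ≠ 1) :
    dftAt (haarWavelet r l p) ω = ((1/Real.sqrt (2^r) : ℝ):ℂ) * (((2:ℝ)^(((l:ℝ)-(r:ℝ))/2) : ℝ):ℂ) *
      -(lchZ r ω ^ (p * 2^(r-l)) * (lchZ r ω ^ (2^(r-l-1)) - 1)^2 / (lchZ r ω - 1)) := by
  rw [dftAt, lch_sum_eq r l p hl hp ω]
  rw [mul_assoc]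
  congr 1
  · norm_num
  rw [_root_.geom_sum_Ico hz (Nat.le_add_right _ _),
      _root_.geom_sum_Ico hz (by simp [two_mul, ← add_assoc] : p*2^(r-l)+2^(r-l-1) ≤ p*2^(r-l)+2*2^(r-l-1))]
  have hzne : lchZ r ω - 1 ≠ 0 := sub_ne_zero.mpr hz
  congr 1
  field_simp
  ring


lemma lch_abs_dft (r l p : ℕ) (hl : l < r) (hp : p < 2^l) (ω : ℤ) (hz : lchZ r ω ≠ 1) :
    ‖dftAt (haarWavelet r l p) ω‖ =
      (1/Real.sqrt (2^r)) * (2:ℝ)^(((l:ℝ)-(r:ℝ))/2) *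
        ‖Complex.exp (((-Real.pi * ω / 2^l : ℝ)) * Complex.I) - 1‖^2 /
        ‖lchZ r ω - 1‖ := by
  rw [lch_dft_eq r l p hl hp ω hz, ← lch_zm r l hl ω]
  rw [norm_mul, norm_mul, norm_neg, norm_div, norm_mul, norm_pow, norm_pow]
  have h1 : ‖lchZ r ω‖ = 1 := by
    rw [lchZ, Complex.norm_exp_ofReal_mul_I]
  rw [h1, one_pow, one_mul, Complex.norm_real, Complex.norm_real, Real.norm_eq_abs, Real.norm_eq_abs]
  rw [_root_.abs_of_nonneg (by positivity : (0:ℝ) ≤ 1/Real.sqrt (2^r)),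
      _root_.abs_of_nonneg (Real.rpow_nonneg (by norm_num) _)]
  ring


lemma lch_dft_zero (r l p : ℕ) (hl : l < r) (hp : p < 2^l) :
    dftAt (haarWavelet r l p) 0 = 0 := by
  rw [dftAt, lch_sum_eq r l p hl hp 0]
  have hz : lchZ r 0 = 1 := by
    rw [lchZ]; push_cast; simp
  rw [hz]
  simp only [one_pow, Finset.sum_const, Nat.card_Ico, nsmul_eq_mul, mul_one]
  have key : ∀ a m : ℕ, a + m - a = m ∧ a + 2*m - (a + m) = m := fun a m => by omega
  have h1 := (key (p * 2^(r-l)) (2^(r-l-1))).1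
  have h2 := (key (p * 2^(r-l)) (2^(r-l-1))).2
  rw [h1, h2, sub_self, mul_zero, mul_zero]


lemma lch_theta_abs (r : ℕ) (ω : ℤ) : |(-2 * Real.pi * ω / 2^r : ℝ)| = 2*π*|(ω:ℝ)|/2^r := by
  rw [abs_div, abs_mul, abs_mul, abs_neg, _root_.abs_two, _root_.abs_of_pos Real.pi_pos,
    _root_.abs_of_pos (by positivity : (0:ℝ) < 2^r)]


lemma lch_thetam_abs (l : ℕ) (ω : ℤ) : |(-Real.pi * ω / 2^l : ℝ)| = π*|(ω:ℝ)|/2^l := by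
  rw [abs_div, abs_mul, abs_neg, _root_.abs_of_pos Real.pi_pos,
    _root_.abs_of_pos (by positivity : (0:ℝ) < 2^l)]


lemma lch_two_pow_r (r : ℕ) (hr : 0 < r) : (2:ℝ)^r = 2*2^(r-1) := by
  rw [← pow_succ']
  congr 1
  omega


lemma lch_B_lb (r : ℕ) (hr : 0 < r) (ω : ℤ) (hωr : |(ω:ℝ)| ≤ 2^(r-1)) :
    4 * |(ω:ℝ)| / 2^r ≤ ‖lchZ r ω - 1‖ := by
  have hθ : |(-2 * Real.pi * ω / 2^r : ℝ)| ≤ π := by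
    rw [lch_theta_abs, lch_two_pow_r r hr]
    rw [div_le_iff₀ (by positivity)]
    nlinarith [Real.pi_pos, (by positivity : (0:ℝ) < 2^(r-1))]
  have := le_normExpI _ hθ
  rw [lch_theta_abs] at this
  rw [lchZ]
  calc 4 * |(ω:ℝ)| / 2^r = 2/π * (2*π*|(ω:ℝ)|/2^r) := by field_simp; ring
    _ ≤ _ := this


lemma lch_B_ub (r : ℕ) (ω : ℤ) :
    ‖lchZ r ω - 1‖ ≤ 2*π*|(ω:ℝ)|/2^r := by
  have := normExpI_le (-2 * Real.pi * ω / 2^r : ℝ)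
  rw [lch_theta_abs] at this
  rw [lchZ]; exact this


lemma lch_A_ub (l : ℕ) (ω : ℤ) :
    ‖Complex.exp (((-Real.pi * ω / 2^l : ℝ)) * Complex.I) - 1‖ ≤ π*|(ω:ℝ)|/2^l := by
  have := normExpI_le (-Real.pi * ω / 2^l : ℝ)
  rwa [lch_thetam_abs] at this


lemma lch_A_ub2 (l : ℕ) (ω : ℤ) :
    ‖Complex.exp (((-Real.pi * ω / 2^l : ℝ)) * Complex.I) - 1‖ ≤ 2 := by
  rw [normExpI]
  have h1 := Real.neg_one_le_sin (-Real.pi * ω / 2^l / 2)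
  have h2 := Real.sin_le_one (-Real.pi * ω / 2^l / 2)
  have : |Real.sin (-Real.pi * ↑ω / 2^l / 2)| ≤ 1 := abs_le.mpr ⟨h1, h2⟩
  linarith


lemma lch_A_lb (l : ℕ) (ω : ℤ) (hω : |(ω:ℝ)| ≤ 2^l) :
    2 * |(ω:ℝ)| / 2^l ≤ ‖Complex.exp (((-Real.pi * ω / 2^l : ℝ)) * Complex.I) - 1‖ := by
  have hθ : |(-Real.pi * ω / 2^l : ℝ)| ≤ π := by
    rw [lch_thetam_abs, div_le_iff₀ (by positivity)]
    nlinarith [Real.pi_pos, (by positivity : (0:ℝ) < 2^l)]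
  have := le_normExpI _ hθ
  rw [lch_thetam_abs] at this
  calc 2 * |(ω:ℝ)| / 2^l = 2/π * (π*|(ω:ℝ)|/2^l) := by field_simp
    _ ≤ _ := this


lemma lch_s2 (r : ℕ) : (1/Real.sqrt (2^r))^2 = 1/2^r := by
  rw [div_pow, one_pow, Real.sq_sqrt (by positivity : (0:ℝ) ≤ 2^r)]


lemma lch_h2 (r l : ℕ) (hl : l < r) : ((2:ℝ)^(((l:ℝ)-(r:ℝ))/2))^2 = 2^l/2^r := by
  rw [← Real.rpow_natCast ((2:ℝ)^(((l:ℝ)-(r:ℝ))/2)) 2, ← Real.rpow_mul (by norm_num)]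
  push_cast
  rw [div_mul_cancel₀ _ (by norm_num : (2:ℝ) ≠ 0)]
  rw [Real.rpow_sub (by norm_num), Real.rpow_natCast, Real.rpow_natCast]


lemma lch_hz (r : ℕ) (hr : 0 < r) (ω : ℤ) (hω : 1 ≤ |(ω:ℝ)|) (hωr : |(ω:ℝ)| ≤ 2^(r-1)) :
    lchZ r ω ≠ 1 := by
  intro h
  have hb := lch_B_lb r hr ω hωr
  rw [h, sub_self, norm_zero] at hb
  have : (0:ℝ) < 4 * |(ω:ℝ)| / 2^r := by positivity
  linarith


lemma lch_sq_ub (r l : ℕ) (hr : 0 < r) (hl : l < r) (p : ℕ) (hp : p < 2^l) (ω : ℤ)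
    (hω : 1 ≤ |(ω:ℝ)|) (hωr : |(ω:ℝ)| ≤ 2^(r-1)) :
    ‖dftAt (haarWavelet r l p) ω‖^2 ≤ 2^l / |(ω:ℝ)|^2 ∧
    ‖dftAt (haarWavelet r l p) ω‖^2 ≤ π^4/16 * |(ω:ℝ)|^2 / (2^l)^3 := by
  have hz := lch_hz r hr ω hω hωr
  set W := |(ω:ℝ)| with hW
  set A := ‖Complex.exp (((-Real.pi * ω / 2^l : ℝ)) * Complex.I) - 1‖ with hA
  set B := ‖lchZ r ω - 1‖ with hB
  have hWpos : (0:ℝ) < W := lt_of_lt_of_le one_pos hω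
  have hBlb : 4 * W / 2^r ≤ B := lch_B_lb r hr ω hωr
  have hBpos : (0:ℝ) < B := lt_of_lt_of_le (by positivity) hBlb
  have hAub : A ≤ π * W / 2^l := lch_A_ub l ω
  have hAub2 : A ≤ 2 := lch_A_ub2 l ω
  have hAnn : 0 ≤ A := norm_nonneg _
  have hX := lch_abs_dft r l p hl hp ω hz
  have hXsq : ‖dftAt (haarWavelet r l p) ω‖^2
      = (2^l/(2^r)^2) * A^4 / B^2 := by
    rw [hX, div_pow, mul_pow, mul_pow, lch_s2, lch_h2 r l hl, ← hA, ← hB]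
    field_simp
  have hB2 : 16*W^2/(2^r)^2 ≤ B^2 := by
    calc 16*W^2/(2^r)^2 = (4*W/2^r)^2 := by field_simp; ring
      _ ≤ B^2 := pow_le_pow_left₀ (by positivity) hBlb 2
  constructor
  · rw [hXsq]
    calc (2^l/(2^r)^2) * A^4 / B^2 ≤ (2^l/(2^r)^2) * 16 / (16*W^2/(2^r)^2) := by
          apply div_le_div₀ (by positivity) _ (by positivity) hB2
          have h16 : A^4 ≤ 16 := by
            calc A^4 ≤ 2^4 := pow_le_pow_left₀ hAnn hAub2 4
              _ = 16 := by norm_num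
          exact mul_le_mul_of_nonneg_left h16 (by positivity)
      _ = 2^l / W^2 := by field_simp
  · rw [hXsq]
    calc (2^l/(2^r)^2) * A^4 / B^2 ≤ (2^l/(2^r)^2) * (π*W/2^l)^4 / (16*W^2/(2^r)^2) := by
          apply div_le_div₀ (by positivity) _ (by positivity) hB2
          exact mul_le_mul_of_nonneg_left (pow_le_pow_left₀ hAnn hAub 4) (by positivity)
      _ = π^4/16 * W^2 / (2^l)^3 := by field_simp


lemma lch_sq_lb (r j : ℕ) (hj : j < r) (ω : ℤ)
    (hω1 : (2:ℝ)^j ≤ 2*|(ω:ℝ)|) (hω2 : |(ω:ℝ)| ≤ 2^j) :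
    (2:ℝ)^(-(j:ℤ)) / (4*π^2) ≤ ‖dftAt (haarWavelet r j 0) ω‖^2 := by
  have hr : 0 < r := by omega
  have hω : 1 ≤ |(ω:ℝ)| := by
    have hne : ω ≠ 0 := by
      rintro rfl
      simp only [Int.cast_zero, abs_zero, mul_zero] at hω1
      exact absurd hω1 (by positivity : (0:ℝ) < 2^j).not_ge
    have : (1:ℤ) ≤ |ω| := Int.one_le_abs (by omega)
    calc (1:ℝ) ≤ ((|ω| : ℤ) : ℝ) := by exact_mod_cast this
      _ = |(ω:ℝ)| := by push_cast; rfl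
  have hωr : |(ω:ℝ)| ≤ 2^(r-1) := by
    calc |(ω:ℝ)| ≤ 2^j := hω2
      _ ≤ 2^(r-1) := pow_le_pow_right₀ (by norm_num) (by omega)
  have hz := lch_hz r hr ω hω hωr
  have hp : 0 < 2^j := pow_pos two_pos j
  set W := |(ω:ℝ)| with hW
  set A := ‖Complex.exp (((-Real.pi * ω / 2^j : ℝ)) * Complex.I) - 1‖ with hA
  set B := ‖lchZ r ω - 1‖ with hB
  have hWpos : (0:ℝ) < W := lt_of_lt_of_le one_pos hω
  have hBub : B ≤ 2*π*W/2^r := lch_B_ub r ω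
  have hBlb : 4 * W / 2^r ≤ B := lch_B_lb r hr ω hωr
  have hBpos : (0:ℝ) < B := lt_of_lt_of_le (by positivity) hBlb
  have hAlb : 1 ≤ A := by
    have := lch_A_lb j ω hω2
    have h2 : (1:ℝ) ≤ 2 * W / 2^j := by
      rw [le_div_iff₀ (by positivity)]
      linarith
    linarith
  have hAnn : (0:ℝ) ≤ A := by linarith
  have hX := lch_abs_dft r j 0 hj (pow_pos two_pos j) ω hz
  set X := ‖dftAt (haarWavelet r j 0) ω‖ with hXdef
  set s := 1/Real.sqrt (2^r) with hs
  set h := (2:ℝ)^(((j:ℝ)-(r:ℝ))/2) with hh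
  have hspos : 0 < s := by rw [hs]; positivity
  have hhpos : 0 < h := Real.rpow_pos_of_pos (by norm_num) _
  have hstep : s*h/(2*π*W/2^r) ≤ X := by
    rw [hX]
    calc s*h/(2*π*W/2^r) ≤ s*h*A^2/B := by
          apply div_le_div₀ (by positivity) _ hBpos hBub
          have h1A : 1 ≤ A^2 := by nlinarith
          calc s*h = s*h*1 := by ring
            _ ≤ s*h*A^2 := mul_le_mul_of_nonneg_left h1A (by positivity)
      _ = _ := by rw [← hA]
  have hsq : (s*h/(2*π*W/2^r))^2 ≤ X^2 := pow_le_pow_left₀ (by positivity) hstep 2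
  calc (2:ℝ)^(-(j:ℤ)) / (4*π^2) ≤ (s*h/(2*π*W/2^r))^2 := by
        have he : (s*h/(2*π*W/2^r))^2 = (2^j/(2^r)^2) * (2^r)^2/(4*π^2*W^2) := by
          rw [div_pow, mul_pow, hs, lch_s2, hh, lch_h2 r j hj]
          field_simp
          ring
        rw [he]
        have h2 : (2^j/((2:ℝ)^r)^2) * (2^r)^2/(4*π^2*W^2) = 2^j/(4*π^2*W^2) := by
          field_simp
        rw [h2]
        have h3 : (2:ℝ)^(-(j:ℤ)) / (4*π^2) = 2^j/((2^j)^2*(4*π^2)) := by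
          rw [zpow_neg, zpow_natCast]
          field_simp
        rw [h3]
        have hW2 : W^2 ≤ (2^j)^2 := pow_le_pow_left₀ (le_of_lt hWpos) hω2 2
        apply div_le_div_of_nonneg_left (by positivity) (by positivity)
        nlinarith [Real.pi_pos]
    _ ≤ X^2 := hsq


lemma lch_band (j : ℕ) (ω : ℤ) (hω : ω ∈ freqBand j) :
    ω = 0 ∨ ((2:ℝ)^j ≤ 2*|(ω:ℝ)| ∧ 1 ≤ |(ω:ℝ)| ∧ |(ω:ℝ)| ≤ 2^j) := by
  rw [freqBand] at hω
  split_ifs at hω with hj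
  · subst hj
    rcases hω with h|h
    · left; exact h
    · right
      rw [Set.mem_singleton_iff] at h
      subst h; norm_num
  · right
    have hp1 : (1:ℤ) ≤ 2^(j-1) := one_le_pow₀ (by norm_num)
    have h2 : (2:ℤ)^j = 2*2^(j-1) := by rw [← pow_succ']; congr 1; omega
    have key : (2:ℤ)^j ≤ 2*|ω| ∧ 1 ≤ |ω| ∧ |ω| ≤ 2^j := by
      rcases hω with h|h <;> rw [Set.mem_Icc] at h
      · have habs : |ω| = -ω := abs_of_nonpos (by omega)
        omega
      · have habs : |ω| = ω := abs_of_nonneg (by omega)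
        omega
    refine ⟨?_, ?_, ?_⟩
    · calc (2:ℝ)^j = ((2^j : ℤ) : ℝ) := by push_cast; ring
        _ ≤ ((2*|ω| : ℤ) : ℝ) := by exact_mod_cast key.1
        _ = 2*|(ω:ℝ)| := by push_cast; ring
    · calc (1:ℝ) = ((1 : ℤ) : ℝ) := by norm_num
        _ ≤ ((|ω| : ℤ) : ℝ) := by exact_mod_cast key.2.1
        _ = |(ω:ℝ)| := by push_cast; ring
    · calc |(ω:ℝ)| = ((|ω| : ℤ) : ℝ) := by push_cast; ring
        _ ≤ ((2^j : ℤ) : ℝ) := by exact_mod_cast key.2.2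
        _ = (2:ℝ)^j := by push_cast; ring


lemma lch_elem (r j l : ℕ) (hj : j < r) (hl : l < r) (ω : ℤ) (hω : ω ∈ freqBand j)
    (p : ℕ) (hp : p < 2^l) :
    ‖dftAt (haarWavelet r l p) ω‖^2 ≤ 4*2^l/((2:ℝ)^j)^2 ∧
    ‖dftAt (haarWavelet r l p) ω‖^2 ≤ π^4/16*((2:ℝ)^j)^2/((2:ℝ)^l)^3 := by
  rcases lch_band j ω hω with rfl | ⟨h1, h2, h3⟩
  · rw [lch_dft_zero r l p hl hp]
    norm_num
    constructor <;> positivity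
  · have hr : 0 < r := by omega
    have hωr : |(ω:ℝ)| ≤ 2^(r-1) := le_trans h3 (pow_le_pow_right₀ (by norm_num) (by omega))
    obtain ⟨u1, u2⟩ := lch_sq_ub r l hr hl p hp ω h2 hωr
    constructor
    · refine le_trans u1 ?_
      rw [div_le_div_iff₀ (by positivity) (by positivity)]
      have hq : ((2:ℝ)^j)^2 ≤ 4*|(ω:ℝ)|^2 := by nlinarith [abs_nonneg ((ω:ℝ))]
      nlinarith [pow_pos (two_pos (α := ℝ)) l, pow_pos (two_pos (α := ℝ)) j, sq_nonneg |(ω:ℝ)|]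
    · refine le_trans u2 ?_
      have hW2 : |(ω:ℝ)|^2 ≤ ((2:ℝ)^j)^2 := pow_le_pow_left₀ (abs_nonneg _) h3 2
      exact div_le_div₀ (by positivity) (mul_le_mul_of_nonneg_left hW2 (by positivity)) (by positivity) le_rfl


lemma lch_bddAbove (r j l : ℕ) (hj : j < r) (hl : l < r) :
    BddAbove {t : ℝ | ∃ ω ∈ freqBand j, ∃ p < 2 ^ l,
      t = ‖dftAt (haarWavelet r l p) ω‖ ^ 2} := by
  refine ⟨4*2^l/((2:ℝ)^j)^2, ?_⟩
  rintro x ⟨ω, hω, p, hp, rfl⟩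
  exact (lch_elem r j l hj hl ω hω p hp).1


lemma lch_mu_ub1 (r j l : ℕ) (hj : j < r) (hl : l < r) :
    muBlock r j l ≤ 4*2^l/((2:ℝ)^j)^2 := by
  apply Real.sSup_le _ (by positivity)
  rintro x ⟨ω, hω, p, hp, rfl⟩
  exact (lch_elem r j l hj hl ω hω p hp).1


lemma lch_mu_ub2 (r j l : ℕ) (hj : j < r) (hl : l < r) :
    muBlock r j l ≤ π^4/16*((2:ℝ)^j)^2/((2:ℝ)^l)^3 := by
  apply Real.sSup_le _ (by positivity)
  rintro x ⟨ω, hω, p, hp, rfl⟩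
  exact (lch_elem r j l hj hl ω hω p hp).2


lemma lch_mu_lb (r j : ℕ) (hj : j < r) : (2:ℝ)^(-(j:ℤ))/(4*π^2) ≤ muBlock r j j := by
  set ωj : ℤ := if j = 0 then 1 else 2^(j-1)+1 with hωj
  have hp1 : (1:ℤ) ≤ 2^(j-1) := one_le_pow₀ (by norm_num)
  have h2 : j ≠ 0 → (2:ℤ)^j = 2*2^(j-1) := fun h => by rw [← pow_succ']; congr 1; omega
  have hmem : ωj ∈ freqBand j := by
    rw [freqBand, hωj]
    by_cases h : j = 0
    · simp [h]
    · rw [if_neg h, if_neg h]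
      right
      rw [Set.mem_Icc]
      exact ⟨le_refl _, by have := h2 h; omega⟩
  have hint : (2:ℤ)^j ≤ 2*|ωj| ∧ |ωj| ≤ 2^j := by
    rw [hωj]
    by_cases h : j = 0
    · subst h; norm_num
    · rw [if_neg h]
      have := h2 h
      have habs : |(2:ℤ)^(j-1)+1| = 2^(j-1)+1 := abs_of_nonneg (by omega)
      omega
  have h1 : (2:ℝ)^j ≤ 2*|(ωj:ℝ)| := by
    calc (2:ℝ)^j = ((2^j : ℤ) : ℝ) := by push_cast; ring
      _ ≤ ((2*|ωj| : ℤ) : ℝ) := by exact_mod_cast hint.1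
      _ = 2*|(ωj:ℝ)| := by push_cast; ring
  have h3 : |(ωj:ℝ)| ≤ 2^j := by
    calc |(ωj:ℝ)| = ((|ωj| : ℤ) : ℝ) := by push_cast; ring
      _ ≤ ((2^j : ℤ) : ℝ) := by exact_mod_cast hint.2
      _ = (2:ℝ)^j := by push_cast; ring
  refine le_trans (lch_sq_lb r j hj ωj h1 h3) ?_
  exact le_csSup (lch_bddAbove r j j hj hj) ⟨ωj, hmem, 0, pow_pos two_pos j, rfl⟩


end LCHAux

open Real in
/-- with sampling levels the dyadic frequency bands and sparsity levels
the Haar wavelet scales, the blocks of `U = FΦ` satisfy `μ(U_{jj}) ≲ 2^{-j}` and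
`μ(U_{jl}) ≲ μ(U_{jj}) 2^{-|j-l|}`, with an absolute constant independent of `r, j, l`. -/
theorem local_coherence_fourier_haar :
    ∃ C : ℝ, 0 < C ∧ ∀ r j l : ℕ, j < r → l < r →
      muBlock r j j ≤ C * (2 : ℝ) ^ (-(j : ℤ)) ∧
      muBlock r j l ≤ C * muBlock r j j * (2 : ℝ) ^ (-|(j : ℤ) - (l : ℤ)|) := by
  have hπ3 : (3:ℝ) < π := Real.pi_gt_three
  have hπ0 : (0:ℝ) < π := by linarith
  have hp3 : (27:ℝ) ≤ π^3 := by nlinarith [hπ3, hπ0, sq_nonneg (π-3)]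
  have hp4 : (81:ℝ) ≤ π^4 := by nlinarith [hp3]
  have hp6 : (729:ℝ) ≤ π^6 := by nlinarith [hp3, hπ0]
  refine ⟨π^6, by positivity, ?_⟩
  intro r j l hj hl
  have hzj : (0:ℝ) < (2:ℝ)^(-(j:ℤ)) := by positivity
  have hE : (0:ℝ) < (2:ℝ)^(-|(j:ℤ)-(l:ℤ)|) := by positivity
  have hm0 := lch_mu_lb r j hj
  have hmu0 : 0 ≤ muBlock r j j := le_trans (by positivity) hm0
  constructor
  · calc muBlock r j j ≤ 4*2^j/((2:ℝ)^j)^2 := lch_mu_ub1 r j j hj hj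
      _ = 4 * (2:ℝ)^(-(j:ℤ)) := by
          rw [zpow_neg, zpow_natCast]
          field_simp
      _ ≤ π^6 * (2:ℝ)^(-(j:ℤ)) := by
          exact mul_le_mul_of_nonneg_right (by linarith) hzj.le
  · -- second inequality
    have hmain : muBlock r j l ≤ π^6 * ((2:ℝ)^(-(j:ℤ))/(4*π^2)) * (2:ℝ)^(-|(j:ℤ)-(l:ℤ)|) := by
      have hkey : π^6 * ((2:ℝ)^(-(j:ℤ))/(4*π^2)) * (2:ℝ)^(-|(j:ℤ)-(l:ℤ)|)
          = (π^4/4) * ((2:ℝ)^(-(j:ℤ)) * (2:ℝ)^(-|(j:ℤ)-(l:ℤ)|)) := by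
        field_simp
      rw [hkey]
      rcases le_or_gt l j with hle | hlt
      · have habs : -|(j:ℤ)-(l:ℤ)| = (l:ℤ) - j := by
          rw [abs_of_nonneg (by omega : (0:ℤ) ≤ (j:ℤ)-(l:ℤ))]
          ring
        rw [habs]
        have hrhs : (2:ℝ)^(-(j:ℤ)) * (2:ℝ)^((l:ℤ)-(j:ℤ)) = 2^l/((2:ℝ)^j)^2 := by
          rw [zpow_neg, zpow_natCast, zpow_sub₀ (by norm_num : (2:ℝ) ≠ 0),
            zpow_natCast, zpow_natCast]
          field_simp
        rw [hrhs]
        calc muBlock r j l ≤ 4*2^l/((2:ℝ)^j)^2 := lch_mu_ub1 r j l hj hl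
          _ = 4 * (2^l/((2:ℝ)^j)^2) := by ring
          _ ≤ (π^4/4) * (2^l/((2:ℝ)^j)^2) := by
              apply mul_le_mul_of_nonneg_right (by linarith) (by positivity)
      · have hle' : j ≤ l := le_of_lt hlt
        have habs : -|(j:ℤ)-(l:ℤ)| = (j:ℤ) - l := by
          rw [abs_of_nonpos (by omega : (j:ℤ)-(l:ℤ) ≤ 0)]
          ring
        rw [habs]
        have hrhs : (2:ℝ)^(-(j:ℤ)) * (2:ℝ)^((j:ℤ)-(l:ℤ)) = 1/(2:ℝ)^l := by
          rw [zpow_neg, zpow_natCast, zpow_sub₀ (by norm_num : (2:ℝ) ≠ 0),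
            zpow_natCast, zpow_natCast]
          field_simp
        rw [hrhs]
        have hjl2 : ((2:ℝ)^j)^2 ≤ ((2:ℝ)^l)^2 :=
          pow_le_pow_left₀ (by positivity) (pow_le_pow_right₀ (by norm_num) hle') 2
        calc muBlock r j l ≤ π^4/16*((2:ℝ)^j)^2/((2:ℝ)^l)^3 := lch_mu_ub2 r j l hj hl
          _ ≤ π^4/16*((2:ℝ)^l)^2/((2:ℝ)^l)^3 :=
              div_le_div₀ (by positivity) (mul_le_mul_of_nonneg_left hjl2 (by positivity))
                (by positivity) le_rfl
          _ = (π^4/16) * (1/(2:ℝ)^l) := by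
              field_simp
          _ ≤ (π^4/4) * (1/(2:ℝ)^l) := by
              apply mul_le_mul_of_nonneg_right (by linarith) (by positivity)
    refine le_trans hmain ?_
    apply mul_le_mul_of_nonneg_right _ hE.le
    exact mul_le_mul_of_nonneg_left hm0 (by positivity)
end

section
/- Sharpness in the ratio constant: for every a ∈ ℕ and every function f with f(λ) = o(√λ) as λ → ∞, there exists a two-level sparsity pattern (k,M) with ratio constant λ and a matrix A whose RIP-in-levels constant satisfies δ_{ak} ≤ 1/|f(λ)|, yet some x ∈ Σ_{k,M} is not the unique minimizer of min ‖z‖₁ subject to Az = Ax. -/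
/-- `c` is `(k, M)`-sparse: at most `k j` nonzero entries in the `j`-th level
`{M_{j}, ..., M_{j+1} - 1}` (0-indexed). -/
def SparseInLevels {n : ℕ} (r : ℕ) (M : ℕ → ℕ) (k : ℕ → ℕ) (c : Fin n → ℂ) : Prop :=
  ∀ j < r, (Finset.univ.filter fun i : Fin n =>
    c i ≠ 0 ∧ M j ≤ (i : ℕ) ∧ (i : ℕ) < M (j + 1)).card ≤ k j

open Finset Complex

noncomputable def Amat (N : ℕ) : Matrix (Fin (N+N)) (Fin (N+N)) ℂ := fun r c =>
  if (c:ℕ) < N then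
    (if (r:ℕ) < N then (if (r:ℕ) = (c:ℕ) then 1 else 0) - (N:ℂ)⁻¹ else (N:ℂ)⁻¹)
  else
    (if (r:ℕ) < N then 0 else if (r:ℕ) = (c:ℕ) then 1 else 0)

lemma mulVec_cast (N : ℕ) (v : Fin (N+N) → ℂ) (r : Fin N) :
    (Amat N).mulVec v (Fin.castAdd N r)
      = v (Fin.castAdd N r) - (∑ i : Fin N, v (Fin.castAdd N i)) * (N:ℂ)⁻¹ := by
  unfold Matrix.mulVec Amat dotProduct
  rw [Fin.sum_univ_add]
  simp only [Fin.coe_castAdd, Fin.coe_natAdd, Fin.is_lt, if_true]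
  have h1 : ∀ i : Fin N, ¬ (N + (i:ℕ) < N) := fun i => by omega
  simp only [h1, if_false, Fin.is_lt, if_true, zero_mul, Finset.sum_const_zero, add_zero]
  have : ∀ i : Fin N, ((r:ℕ) = (i:ℕ)) = (r = i) := fun i => by
    simp [Fin.val_eq_val]
  simp only [this, sub_mul, ite_mul, one_mul, zero_mul, Finset.sum_sub_distrib]
  rw [Finset.sum_ite_eq (Finset.univ) r (fun i => v (Fin.castAdd N i))]
  simp only [Finset.mem_univ, if_true, ← Finset.mul_sum]
  ring

lemma mulVec_nat (N : ℕ) (v : Fin (N+N) → ℂ) (r : Fin N) :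
    (Amat N).mulVec v (Fin.natAdd N r)
      = (∑ i : Fin N, v (Fin.castAdd N i)) * (N:ℂ)⁻¹ + v (Fin.natAdd N r) := by
  unfold Matrix.mulVec Amat dotProduct
  rw [Fin.sum_univ_add]
  simp only [Fin.coe_castAdd, Fin.coe_natAdd, Fin.is_lt, if_true]
  have h1 : ∀ i : Fin N, ¬ (N + (i:ℕ) < N) := fun i => by omega
  simp only [h1, if_false]
  have : ∀ i : Fin N, (N + (r:ℕ) = N + (i:ℕ)) = (r = i) := fun i => by
    simp [Fin.val_eq_val]
  simp only [this, ite_mul, one_mul, zero_mul]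
  rw [Finset.sum_ite_eq (Finset.univ) r (fun i => v (Fin.natAdd N i))]
  simp only [Finset.mem_univ, if_true, ← Finset.mul_sum]
  ring

lemma expand_sum (N : ℕ) (t : ℂ) (u : Fin N → ℂ) :
    ∑ r : Fin N, (u r + t) * (starRingEnd ℂ) (u r + t)
      = ∑ r, u r * (starRingEnd ℂ) (u r) + (∑ r, u r) * (starRingEnd ℂ) t
        + t * (starRingEnd ℂ) (∑ r, u r) + (N : ℂ) * (t * (starRingEnd ℂ) t) := by
  have h : ∀ r, (u r + t) * (starRingEnd ℂ) (u r + t)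
      = u r * (starRingEnd ℂ) (u r) + u r * (starRingEnd ℂ) t
        + t * (starRingEnd ℂ) (u r) + t * (starRingEnd ℂ) t := by
    intro r; simp only [map_add]; ring
  simp_rw [h, Finset.sum_add_distrib, ← Finset.sum_mul, ← Finset.mul_sum, ← map_sum,
    Finset.sum_const, Finset.card_univ, Fintype.card_fin, nsmul_eq_mul]
  ring

lemma complex_identity (N : ℕ) (hN : 0 < N) (v : Fin (N+N) → ℂ) :
    ∑ r : Fin (N+N), ((Amat N).mulVec v r) * (starRingEnd ℂ) ((Amat N).mulVec v r)
      = ∑ r : Fin (N+N), v r * (starRingEnd ℂ) (v r)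
        + ((∑ i : Fin N, v (Fin.castAdd N i)) * (starRingEnd ℂ) (∑ i : Fin N, v (Fin.natAdd N i))
          + (starRingEnd ℂ) (∑ i : Fin N, v (Fin.castAdd N i)) * (∑ i : Fin N, v (Fin.natAdd N i))) * (N:ℂ)⁻¹ := by
  have hNc : (N:ℂ) ≠ 0 := Nat.cast_ne_zero.mpr hN.ne'
  set S0 := ∑ i : Fin N, v (Fin.castAdd N i) with hS0
  set S1 := ∑ i : Fin N, v (Fin.natAdd N i) with hS1
  rw [Fin.sum_univ_add, Fin.sum_univ_add (f := fun r => v r * (starRingEnd ℂ) (v r))]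
  simp_rw [mulVec_cast, mulVec_nat]
  have e1 : ∀ r : Fin N, v (Fin.castAdd N r) - S0 * (N:ℂ)⁻¹
      = v (Fin.castAdd N r) + (-(S0 * (N:ℂ)⁻¹)) := by intro r; ring
  have e2 : ∀ r : Fin N, S0 * (N:ℂ)⁻¹ + v (Fin.natAdd N r)
      = v (Fin.natAdd N r) + S0 * (N:ℂ)⁻¹ := by intro r; ring
  simp_rw [← hS0]
  simp_rw [e1, e2, expand_sum, ← hS0, ← hS1]
  simp only [map_neg, map_mul, map_inv₀, Complex.conj_natCast]
  field_simp
  ring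

lemma real_identity (N : ℕ) (hN : 0 < N) (v : Fin (N+N) → ℂ) :
    ∑ r : Fin (N+N), ‖(Amat N).mulVec v r‖ ^ 2
      = ∑ r : Fin (N+N), ‖v r‖ ^ 2
        + 2 * ((starRingEnd ℂ) (∑ i : Fin N, v (Fin.castAdd N i))
            * (∑ i : Fin N, v (Fin.natAdd N i))).re * (N:ℝ)⁻¹ := by
  have h := complex_identity N hN v
  have hre := congrArg Complex.re h
  simp_rw [Complex.mul_conj] at hre
  rw [← Complex.ofReal_sum, ← Complex.ofReal_sum] at hre
  set S0 := ∑ i : Fin N, v (Fin.castAdd N i)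
  set S1 := ∑ i : Fin N, v (Fin.natAdd N i)
  simp only [Complex.add_re, Complex.ofReal_re, Complex.mul_re, Complex.add_im,
    Complex.ofReal_im] at hre
  simp_rw [Complex.sq_norm]
  rw [hre]
  have : ((N:ℂ)⁻¹).re = (N:ℝ)⁻¹ := by
    rw [← Complex.ofReal_natCast, ← Complex.ofReal_inv, Complex.ofReal_re]
  have him : ((N:ℂ)⁻¹).im = 0 := by
    rw [← Complex.ofReal_natCast, ← Complex.ofReal_inv, Complex.ofReal_im]
  rw [this, him]
  simp only [Complex.mul_re, Complex.conj_re, Complex.conj_im]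
  ring

lemma cs_bound {N : ℕ} (c : ℕ) (u : Fin N → ℂ)
    (h : (Finset.univ.filter fun i => u i ≠ 0).card ≤ c) :
    ‖∑ i, u i‖ ^ 2 ≤ (c : ℝ) * ∑ i, ‖u i‖ ^ 2 := by
  classical
  set T := Finset.univ.filter fun i => u i ≠ 0 with hT
  have hsum : ∑ i ∈ T, u i = ∑ i, u i := by
    exact Finset.sum_filter_ne_zero _
  calc ‖∑ i, u i‖ ^ 2
      ≤ (∑ i ∈ T, ‖u i‖) ^ 2 := by
        rw [← hsum]
        have := norm_sum_le T u
        have h0 : (0:ℝ) ≤ ‖∑ i ∈ T, u i‖ := norm_nonneg _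
        nlinarith [Finset.sum_nonneg (fun i (_ : i ∈ T) => norm_nonneg (u i))]
    _ ≤ (T.card : ℝ) * ∑ i ∈ T, ‖u i‖ ^ 2 := by
        exact_mod_cast sq_sum_le_card_mul_sum_sq (s := T) (f := fun i => ‖u i‖)
    _ ≤ (c : ℝ) * ∑ i, ‖u i‖ ^ 2 := by
        apply mul_le_mul (by exact_mod_cast h)
        · exact Finset.sum_le_sum_of_subset_of_nonneg (Finset.filter_subset _ _)
            (fun i _ _ => by positivity)
        · exact Finset.sum_nonneg fun i _ => by positivity
        · positivity

lemma cross_bound (N aa : ℕ) (hN : 0 < N) (v : Fin (N+N) → ℂ)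
    (h0 : ‖∑ i : Fin N, v (Fin.castAdd N i)‖ ^ 2
        ≤ (aa:ℝ) * ∑ i : Fin N, ‖v (Fin.castAdd N i)‖ ^ 2) :
    |2 * ((starRingEnd ℂ) (∑ i : Fin N, v (Fin.castAdd N i))
        * (∑ i : Fin N, v (Fin.natAdd N i))).re * (N:ℝ)⁻¹|
      ≤ (Real.sqrt aa / Real.sqrt N) * ∑ r : Fin (N+N), ‖v r‖ ^ 2 := by
  set S0 := ∑ i : Fin N, v (Fin.castAdd N i)
  set S1 := ∑ i : Fin N, v (Fin.natAdd N i)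
  set P0 := ∑ i : Fin N, ‖v (Fin.castAdd N i)‖ ^ 2 with hP0def
  set P1 := ∑ i : Fin N, ‖v (Fin.natAdd N i)‖ ^ 2 with hP1def
  have hsplit : ∑ r : Fin (N+N), ‖v r‖ ^ 2 = P0 + P1 := by
    rw [Fin.sum_univ_add]
  have h1 : ‖S1‖ ^ 2 ≤ (N:ℝ) * P1 := by
    apply cs_bound
    exact le_trans (Finset.card_le_card (Finset.filter_subset _ _)) (by simp)
  have hP0 : (0:ℝ) ≤ P0 := Finset.sum_nonneg fun i _ => by positivity
  have hP1 : (0:ℝ) ≤ P1 := Finset.sum_nonneg fun i _ => by positivity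
  have habs0 : ‖S0‖ ≤ Real.sqrt aa * Real.sqrt P0 := by
    rw [← Real.sqrt_mul (Nat.cast_nonneg aa)]
    rw [show ‖S0‖ = Real.sqrt (‖S0‖ ^ 2) by
      rw [Real.sqrt_sq (norm_nonneg _)]]
    exact Real.sqrt_le_sqrt h0
  have habs1 : ‖S1‖ ≤ Real.sqrt N * Real.sqrt P1 := by
    rw [← Real.sqrt_mul (Nat.cast_nonneg N)]
    rw [show ‖S1‖ = Real.sqrt (‖S1‖ ^ 2) by
      rw [Real.sqrt_sq (norm_nonneg _)]]
    exact Real.sqrt_le_sqrt h1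
  have hre : |((starRingEnd ℂ) S0 * S1).re| ≤ ‖S0‖ * ‖S1‖ := by
    calc |((starRingEnd ℂ) S0 * S1).re| ≤ ‖(starRingEnd ℂ) S0 * S1‖ :=
          Complex.abs_re_le_norm _
      _ = ‖S0‖ * ‖S1‖ := by rw [norm_mul, Complex.norm_conj]
  rw [hsplit, abs_mul, abs_mul]
  have hNpos : (0:ℝ) < N := by exact_mod_cast hN
  have hsN : (0:ℝ) < Real.sqrt N := Real.sqrt_pos.mpr hNpos
  have key : Real.sqrt N * (N:ℝ)⁻¹ = (Real.sqrt N)⁻¹ := by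
    rw [show ((N:ℝ))⁻¹ = ((Real.sqrt N) * (Real.sqrt N))⁻¹ by
      rw [Real.mul_self_sqrt hNpos.le], mul_inv]
    field_simp
  have h2ab : 2 * (Real.sqrt P0 * Real.sqrt P1) ≤ P0 + P1 := by
    nlinarith [Real.sq_sqrt hP0, Real.sq_sqrt hP1, sq_nonneg (Real.sqrt P0 - Real.sqrt P1),
      Real.sqrt_nonneg P0, Real.sqrt_nonneg P1]
  calc |2| * |((starRingEnd ℂ) S0 * S1).re| * |(N:ℝ)⁻¹|
      ≤ 2 * (‖S0‖ * ‖S1‖) * (N:ℝ)⁻¹ := by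
        rw [_root_.abs_of_nonneg (by norm_num : (0:ℝ) ≤ (2:ℝ)), _root_.abs_of_nonneg (by positivity : (0:ℝ) ≤ (N:ℝ)⁻¹)]
        gcongr
    _ ≤ 2 * ((Real.sqrt aa * Real.sqrt P0) * (Real.sqrt N * Real.sqrt P1)) * (N:ℝ)⁻¹ := by
        gcongr <;> positivity
    _ = (Real.sqrt aa / Real.sqrt N) * (2 * (Real.sqrt P0 * Real.sqrt P1)) := by
        rw [div_eq_mul_inv, ← key]; ring
    _ ≤ (Real.sqrt aa / Real.sqrt N) * (P0 + P1) := by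
        apply mul_le_mul_of_nonneg_left h2ab (by positivity)



/-- sharpness in the ratio constant: for every `a ∈ ℕ` and every `f`
with `f(λ) = o(√λ)`, there exist a two-level sparsity pattern with ratio constant `λ`
and a matrix `A` whose RIP-in-levels constant for `(ak, M)` satisfies
`δ_{ak} ≤ 1/|f(λ)|` (equivalently `δ_{ak}·|f(λ)| ≤ 1`), yet some `(k, M)`-sparse `x` is
not the unique minimizer of `min ‖z‖₁ s.t. Az = Ax`. -/
theorem ripInLevels_sharp_in_ratio (a : ℕ)
    (f : ℝ → ℝ)
    (hf : Filter.Tendsto (fun t => f t / Real.sqrt t) Filter.atTop (nhds 0)) :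
    ∃ (m n : ℕ) (M : ℕ → ℕ) (k : ℕ → ℕ) (A : Matrix (Fin m) (Fin n) ℂ)
      (x : Fin n → ℂ) (lam δ : ℝ),
      M 0 = 0 ∧ M 2 = n ∧ Monotone M ∧
      (∀ j < 2, 1 ≤ k j ∧ k j ≤ M (j + 1) - M j) ∧
      -- ratio constant of the two-level pattern
      lam = max ((k 0 : ℝ) / (k 1 : ℝ)) ((k 1 : ℝ) / (k 0 : ℝ)) ∧
      -- A has RIP-in-levels constant δ for the pattern (ak, M), with δ ≤ 1/|f(λ)|
      0 ≤ δ ∧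
      (∀ v : Fin n → ℂ, SparseInLevels 2 M (fun j => a * k j) v →
        (1 - δ) * ∑ i, ‖v i‖ ^ 2 ≤ ∑ i, ‖A.mulVec v i‖ ^ 2 ∧
        ∑ i, ‖A.mulVec v i‖ ^ 2 ≤ (1 + δ) * ∑ i, ‖v i‖ ^ 2) ∧
      δ * |f lam| ≤ 1 ∧
      -- yet ℓ¹ recovery of some (k, M)-sparse x fails
      SparseInLevels 2 M k x ∧
      (∃ z : Fin n → ℂ, z ≠ x ∧ A.mulVec z = A.mulVec x ∧
        ∑ i, ‖z i‖ ≤ ∑ i, ‖x i‖) := by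
  classical
  have hε : (0:ℝ) < 1/(a+1) := by positivity
  obtain ⟨T, hT⟩ := Metric.tendsto_atTop.mp hf (1/(a+1)) hε
  set N : ℕ := max (⌈T⌉₊) 1 with hNdef
  have hN1 : 1 ≤ N := le_max_right _ _
  have hN0 : 0 < N := hN1
  have hNR : (0:ℝ) < N := by exact_mod_cast hN0
  have hTN : T ≤ (N:ℝ) := le_trans (Nat.le_ceil T) (by exact_mod_cast le_max_left _ _)
  have hfN : |f N| / Real.sqrt N < 1/(a+1) := by
    have := hT (N:ℝ) hTN
    rwa [Real.dist_eq, sub_zero, abs_div, _root_.abs_of_nonneg (Real.sqrt_nonneg _)] at this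
  have hsN : (0:ℝ) < Real.sqrt N := Real.sqrt_pos.mpr hNR
  refine ⟨N + N, N + N, fun j => min j 2 * N, fun j => if j = 0 then 1 else N,
    Amat N, fun i => if (i:ℕ) < N then 0 else ((Real.sqrt N)⁻¹ : ℝ),
    (N:ℝ), Real.sqrt a / Real.sqrt N, ?_, ?_, ?_, ?_, ?_, ?_, ?_, ?_, ?_, ?_⟩
  · simp
  · simp [two_mul]
  · exact fun i j h => Nat.mul_le_mul_right N (min_le_min h le_rfl)
  · intro j hj
    interval_cases j <;> simp <;> omega
  · have h1 : ((if 0 = 0 then 1 else N : ℕ) : ℝ) = 1 := by norm_num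
    have h2 : ((if 1 = 0 then 1 else N : ℕ) : ℝ) = N := by norm_num
    rw [h1, h2]
    rw [max_eq_right]
    · rw [div_one]
    · rw [div_one]
      calc (1:ℝ)/N ≤ 1 := by
            rw [div_le_one hNR]; exact_mod_cast hN1
        _ ≤ N := by exact_mod_cast hN1
  · positivity
  · -- RIP
    intro v hv
    have hcard : (Finset.univ.filter fun i : Fin N => v (Fin.castAdd N i) ≠ 0).card ≤ a := by
      have h0 := hv 0 (by norm_num)
      have hsub : (Finset.univ.filter fun i : Fin N => v (Fin.castAdd N i) ≠ 0).card
          ≤ (Finset.univ.filter fun i : Fin (N+N) =>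
              v i ≠ 0 ∧ min 0 2 * N ≤ (i:ℕ) ∧ (i:ℕ) < min (0+1) 2 * N).card := by
        apply Finset.card_le_card_of_injOn (fun i => Fin.castAdd N i)
        · intro i hi
          simp only [Finset.mem_coe, Finset.mem_filter, Finset.mem_univ, true_and] at hi ⊢
          refine ⟨hi, by simp, by simpa using i.isLt⟩
        · intro i _ j _ hij
          exact Fin.castAdd_injective _ _ hij
      calc _ ≤ _ := hsub
        _ ≤ a * (if 0 = 0 then 1 else N) := h0
        _ = a := by norm_num
    have h0 : ‖∑ i : Fin N, v (Fin.castAdd N i)‖ ^ 2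
        ≤ (a:ℝ) * ∑ i : Fin N, ‖v (Fin.castAdd N i)‖ ^ 2 :=
      cs_bound a _ hcard
    have hid := real_identity N hN0 v
    have hcross := cross_bound N a hN0 v h0
    set E := 2 * ((starRingEnd ℂ) (∑ i : Fin N, v (Fin.castAdd N i))
        * (∑ i : Fin N, v (Fin.natAdd N i))).re * (N:ℝ)⁻¹
    obtain ⟨hcl, hcu⟩ := abs_le.mp hcross
    constructor
    · rw [hid]; linarith
    · rw [hid]; linarith
  · -- δ * |f N| ≤ 1
    have hsa : Real.sqrt a ≤ (a:ℝ) + 1 := by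
      rw [show ((a:ℝ) + 1) = Real.sqrt (((a:ℝ)+1)^2) by
        rw [Real.sqrt_sq (by positivity)]]
      apply Real.sqrt_le_sqrt
      nlinarith [Nat.cast_nonneg (α := ℝ) a]
    calc Real.sqrt a / Real.sqrt N * |f N|
        = Real.sqrt a * (|f N| / Real.sqrt N) := by ring
      _ ≤ Real.sqrt a * (1/(a+1)) := by
          apply mul_le_mul_of_nonneg_left hfN.le (Real.sqrt_nonneg _)
      _ ≤ ((a:ℝ)+1) * (1/(a+1)) := by
          apply mul_le_mul_of_nonneg_right hsa (by positivity)
      _ = 1 := by field_simp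
  · -- sparsity of x
    intro j hj
    interval_cases j
    · convert Nat.zero_le _
      rw [Finset.card_eq_zero, Finset.filter_eq_empty_iff]
      intro i _
      simp only [Nat.min_self, Nat.zero_le, true_and, not_and]
      intro hne
      by_contra h
      push_neg at h
      have : (i:ℕ) < min 1 2 * N := h.2
      simp only [show min 1 2 = 1 by norm_num, one_mul] at this
      exact hne (by simp [this])
    · have hcard2 : (Finset.univ.filter fun i : Fin (N+N) =>
          (if (i:ℕ) < N then (0:ℂ) else ((Real.sqrt N)⁻¹ : ℝ)) ≠ 0
            ∧ min 1 2 * N ≤ (i:ℕ) ∧ (i:ℕ) < min (1+1) 2 * N).card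
          ≤ (Finset.univ : Finset (Fin N)).card := by
        apply Finset.card_le_card_of_injOn
          (fun i : Fin (N+N) => (⟨(i:ℕ) - N, by have := i.isLt; omega⟩ : Fin N))
        · intro i _; exact Finset.mem_univ _
        · intro i hi j hj hij
          simp only [Finset.mem_coe, Finset.mem_filter, Finset.mem_univ, true_and,
            show min 1 2 = 1 by norm_num, one_mul] at hi hj
          have h1 : N ≤ (i:ℕ) := hi.2.1
          have h2 : N ≤ (j:ℕ) := hj.2.1
          have := congrArg Fin.val hij
          simp only at this
          exact Fin.ext (by omega)
      simpa using hcard2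
  · -- failure of recovery
    refine ⟨fun i => if (i:ℕ) < N then ((Real.sqrt N)⁻¹ : ℝ) else 0, ?_, ?_, ?_⟩
    · intro h
      have h0 := congrFun h (⟨0, by omega⟩ : Fin (N+N))
      have hlt : (((⟨0, by omega⟩ : Fin (N+N))) : ℕ) < N := hN0
      rw [if_pos hlt, if_pos hlt] at h0
      have : ((Real.sqrt N)⁻¹ : ℝ) ≠ 0 := by positivity
      exact this (by exact_mod_cast h0)
    · funext r
      have hS0z : ∑ i : Fin N, (fun i : Fin (N+N) =>
          if (i:ℕ) < N then (((Real.sqrt N)⁻¹ : ℝ) : ℂ) else 0) (Fin.castAdd N i)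
            = (N : ℂ) * (((Real.sqrt N)⁻¹ : ℝ) : ℂ) := by
        simp only [Fin.coe_castAdd, Fin.is_lt, if_true]
        simp [Finset.sum_const]
      have hS0x : ∑ i : Fin N, (fun i : Fin (N+N) =>
          if (i:ℕ) < N then (0:ℂ) else (((Real.sqrt N)⁻¹ : ℝ) : ℂ)) (Fin.castAdd N i) = 0 := by
        simp only [Fin.coe_castAdd, Fin.is_lt, if_true]
        simp
      have hNc : (N:ℂ) ≠ 0 := Nat.cast_ne_zero.mpr hN0.ne'
      have hs : ((Real.sqrt N : ℝ) : ℂ) ≠ 0 := Complex.ofReal_ne_zero.mpr hsN.ne'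
      refine Fin.addCases (fun r => ?_) (fun r => ?_) r
      · rw [mulVec_cast, mulVec_cast, hS0z, hS0x]
        simp only [Fin.coe_castAdd, Fin.is_lt, if_true]
        field_simp
        ring
      · rw [mulVec_nat, mulVec_nat, hS0z, hS0x]
        have hge : ¬ ((Fin.natAdd N r : Fin (N+N)) : ℕ) < N := by
          simp [Fin.coe_natAdd]
        simp only [hge, if_false]
        field_simp
        ring
    · apply le_of_eq
      rw [Fin.sum_univ_add, Fin.sum_univ_add]
      simp only [Fin.coe_castAdd, Fin.coe_natAdd, Fin.is_lt, if_true]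
      have hge : ∀ i : Fin N, ¬ (N + (i:ℕ) < N) := fun i => by omega
      simp only [hge, if_false]
      simp
end
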